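/- Let τ > 0 and let z* be the unique positive solution of cos(z) = z. Then the function f_τ(λ) = cos(τλ)/(2λ(1 − sin(τλ))) is strictly decreasing on the interval (0, z*/τ] and strictly increasing on the interval [z*/τ, π/(2τ)). Consequently λ = z*/τ is the unique minimizer of f_τ on (0, π/(2τ)), and the derivative of f_τ vanishes at λ ∈ (0, π/(2τ)) if and only if cos(τλ) = τλ. -/

import Mathlib

open Real

private lemma fTau_hasDerivAt (τ lam : ℝ) (hlam : lam ≠ 0) (hs : Real.sin (τ * lam) ≠ 1) :
    HasDerivAt (fun l : ℝ => Real.cos (τ * l) / (2 * l * (1 - Real.sin (τ * l))))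
      ((τ * lam - Real.cos (τ * lam)) / (2 * lam ^ 2 * (1 - Real.sin (τ * lam)))) lam := by
  have ht : HasDerivAt (fun l : ℝ => τ * l) τ lam := by
    simpa using (hasDerivAt_id lam).const_mul τ
  have hc : HasDerivAt (fun l : ℝ => Real.cos (τ * l)) (-Real.sin (τ * lam) * τ) lam :=
    (Real.hasDerivAt_cos (τ * lam)).comp lam ht
  have hsin : HasDerivAt (fun l : ℝ => Real.sin (τ * l)) (Real.cos (τ * lam) * τ) lam :=
    (Real.hasDerivAt_sin (τ * lam)).comp lam ht
  have h1 : HasDerivAt (fun l : ℝ => 2 * l) 2 lam := by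
    simpa using (hasDerivAt_id lam).const_mul 2
  have h2 : HasDerivAt (fun l : ℝ => 1 - Real.sin (τ * l)) (0 - Real.cos (τ * lam) * τ) lam :=
    (hasDerivAt_const lam 1).sub hsin
  have hd : HasDerivAt (fun l : ℝ => 2 * l * (1 - Real.sin (τ * l)))
      (2 * (1 - Real.sin (τ * lam)) + 2 * lam * (0 - Real.cos (τ * lam) * τ)) lam := h1.mul h2
  have hsne : 1 - Real.sin (τ * lam) ≠ 0 := sub_ne_zero.mpr (Ne.symm hs)
  have hdne : 2 * lam * (1 - Real.sin (τ * lam)) ≠ 0 :=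
    mul_ne_zero (mul_ne_zero two_ne_zero hlam) hsne
  have := hc.div hd hdne
  refine HasDerivAt.congr_deriv this (Eq.symm ?_)
  have hpyth : Real.sin (τ * lam) ^ 2 + Real.cos (τ * lam) ^ 2 = 1 :=
    Real.sin_sq_add_cos_sq (τ * lam)
  have hne2 : 2 * lam ^ 2 * (1 - Real.sin (τ * lam)) ≠ 0 :=
    mul_ne_zero (mul_ne_zero two_ne_zero (pow_ne_zero 2 hlam)) hsne
  rw [div_eq_div_iff hne2 (pow_ne_zero 2 hdne)]
  linear_combination (-(4 * lam ^ 3 * τ * (1 - Real.sin (τ * lam)))) * hpyth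

theorem fTau_monotonicity_and_minimizer (τ : ℝ) (hτ : 0 < τ)
    (z : ℝ) (hz : 0 < z) (hzfix : Real.cos z = z) :
    StrictAntiOn (fun lam : ℝ => Real.cos (τ * lam) / (2 * lam * (1 - Real.sin (τ * lam))))
        (Set.Ioc 0 (z / τ)) ∧
      StrictMonoOn (fun lam : ℝ => Real.cos (τ * lam) / (2 * lam * (1 - Real.sin (τ * lam))))
        (Set.Ico (z / τ) (Real.pi / (2 * τ))) ∧
      (∀ lam ∈ Set.Ioo (0 : ℝ) (Real.pi / (2 * τ)), lam ≠ z / τ →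
        Real.cos (τ * (z / τ)) / (2 * (z / τ) * (1 - Real.sin (τ * (z / τ)))) <
          Real.cos (τ * lam) / (2 * lam * (1 - Real.sin (τ * lam)))) ∧
      (∀ lam ∈ Set.Ioo (0 : ℝ) (Real.pi / (2 * τ)),
        (deriv (fun l : ℝ => Real.cos (τ * l) / (2 * l * (1 - Real.sin (τ * l)))) lam = 0 ↔
          Real.cos (τ * lam) = τ * lam)) := by
  have hpi : (3:ℝ) < Real.pi := Real.pi_gt_three
  -- z < 1
  have hz1 : z < 1 := by
    by_contra h
    push_neg at h
    rcases le_or_gt z Real.pi with hle | hgt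
    · have : Real.cos z < Real.cos 0 :=
        Real.cos_lt_cos_of_nonneg_of_le_pi le_rfl hle hz
      rw [Real.cos_zero, hzfix] at this
      linarith
    · have := Real.cos_le_one z
      rw [hzfix] at this
      linarith
  have hzpi2 : z < Real.pi / 2 := by linarith
  have hztau : 0 < z / τ := div_pos hz hτ
  have hzlt : z / τ < Real.pi / (2 * τ) := by
    rw [div_lt_div_iff₀ hτ (by positivity)]
    nlinarith
  have htzz : τ * (z / τ) = z := by field_simp
  -- sin < 1 for u in [0, π/2)
  have hsinlt : ∀ u : ℝ, 0 ≤ u → u < Real.pi / 2 → Real.sin u < 1 := by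
    intro u hu0 hu2
    have h := Real.strictMonoOn_sin (Set.mem_Icc.mpr ⟨by linarith, hu2.le⟩)
      (Set.mem_Icc.mpr ⟨by linarith, le_rfl⟩) hu2
    simpa using h
  -- cos u > u for 0 < u < z
  have hA : ∀ u : ℝ, 0 < u → u < z → u < Real.cos u := by
    intro u hu0 huz
    have : Real.cos z < Real.cos u :=
      Real.cos_lt_cos_of_nonneg_of_le_pi hu0.le (by linarith) huz
    linarith [hzfix ▸ this]
  have hB : ∀ u : ℝ, z < u → u < Real.pi / 2 → Real.cos u < u := by
    intro u hzu hu2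
    have : Real.cos u < Real.cos z :=
      Real.cos_lt_cos_of_nonneg_of_le_pi hz.le (by linarith) hzu
    linarith [hzfix ▸ this]
  set f : ℝ → ℝ := fun lam => Real.cos (τ * lam) / (2 * lam * (1 - Real.sin (τ * lam))) with hf
  -- continuity of f on sets avoiding denominator zeros
  have hcontOn : ∀ s : Set ℝ, (∀ x ∈ s, 2 * x * (1 - Real.sin (τ * x)) ≠ 0) →
      ContinuousOn f s := by
    intro s hs
    exact ContinuousOn.div (by fun_prop) (by fun_prop) hs
  have hderiv : ∀ x : ℝ, x ≠ 0 → Real.sin (τ * x) ≠ 1 →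
      deriv f x = (τ * x - Real.cos (τ * x)) / (2 * x ^ 2 * (1 - Real.sin (τ * x))) := by
    intro x hx hsx
    exact (fTau_hasDerivAt τ x hx hsx).deriv
  -- denominator nonzero on (0, π/(2τ))
  have hden : ∀ x : ℝ, 0 < x → x < Real.pi / (2 * τ) → 2 * x * (1 - Real.sin (τ * x)) ≠ 0 := by
    intro x hx0 hx2
    have hs : Real.sin (τ * x) < 1 := by
      apply hsinlt _ (mul_nonneg hτ.le hx0.le)
      calc τ * x < τ * (Real.pi / (2 * τ)) := by exact mul_lt_mul_of_pos_left hx2 hτ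
        _ = Real.pi / 2 := by field_simp
    have h0 : 0 < 2 * x * (1 - Real.sin (τ * x)) :=
      mul_pos (by linarith) (by linarith)
    exact h0.ne'
  have hanti : StrictAntiOn f (Set.Ioc 0 (z / τ)) := by
    apply strictAntiOn_of_deriv_neg (convex_Ioc _ _)
    · apply hcontOn
      intro x hx
      exact hden x hx.1 (lt_of_le_of_lt hx.2 hzlt)
    · intro x hx
      rw [interior_Ioc] at hx
      have hx0 := hx.1
      have hxz : τ * x < z := by
        have h := (lt_div_iff₀ hτ).mp hx.2
        linarith [mul_comm x τ]
      have hxz' : τ * x < Real.pi / 2 := by linarith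
      have hxt : 0 < τ * x := mul_pos hτ hx0
      have hs1 : Real.sin (τ * x) < 1 := hsinlt _ hxt.le hxz'
      rw [hderiv x hx0.ne' hs1.ne]
      apply div_neg_of_neg_of_pos
      · have := hA (τ * x) hxt hxz
        linarith
      · exact mul_pos (by nlinarith) (by linarith)
  have hmono : StrictMonoOn f (Set.Ico (z / τ) (Real.pi / (2 * τ))) := by
    apply strictMonoOn_of_deriv_pos (convex_Ico _ _)
    · apply hcontOn
      intro x hx
      exact hden x (lt_of_lt_of_le hztau hx.1) hx.2
    · intro x hx
      rw [interior_Ico] at hx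
      have hx0 : 0 < x := lt_trans hztau hx.1
      have hxz : z < τ * x := by
        have : z / τ < x := hx.1
        calc z = τ * (z / τ) := htzz.symm
          _ < τ * x := mul_lt_mul_of_pos_left this hτ
      have hxz' : τ * x < Real.pi / 2 := by
        calc τ * x < τ * (Real.pi / (2 * τ)) := mul_lt_mul_of_pos_left hx.2 hτ
          _ = Real.pi / 2 := by field_simp
      have hs1 : Real.sin (τ * x) < 1 := hsinlt _ (by nlinarith) hxz'
      rw [hderiv x hx0.ne' hs1.ne]
      apply div_pos
      · have := hB (τ * x) hxz hxz'
        linarith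
      · exact mul_pos (by nlinarith) (by linarith)
  refine ⟨hanti, hmono, ?_, ?_⟩
  · intro lam hlam hne
    rcases lt_or_gt_of_ne hne with hlt | hgt
    · exact hanti ⟨hlam.1, le_of_lt hlt⟩ ⟨hztau, le_rfl⟩ hlt
    · exact hmono ⟨le_rfl, hzlt⟩ ⟨le_of_lt hgt, hlam.2⟩ hgt
  · intro lam hlam
    have hs1 : Real.sin (τ * lam) < 1 := by
      apply hsinlt _ (mul_nonneg hτ.le hlam.1.le)
      calc τ * lam < τ * (Real.pi / (2 * τ)) := mul_lt_mul_of_pos_left hlam.2 hτ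
        _ = Real.pi / 2 := by field_simp
    rw [hderiv lam hlam.1.ne' hs1.ne]
    rw [div_eq_zero_iff]
    have hdz : 2 * lam ^ 2 * (1 - Real.sin (τ * lam)) ≠ 0 := by
      have h0 : 0 < 2 * lam ^ 2 * (1 - Real.sin (τ * lam)) :=
        mul_pos (by nlinarith [hlam.1]) (by linarith)
      exact h0.ne'
    constructor
    · rintro (h | h)
      · linarith
      · exact absurd h hdz
    · intro h
      left; linarith
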